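/- For n ≥ 4 and 1 ≤ t ≤ (n-1)/2, the spectral radius of the graph K_1 ∨ ((t-1)K_2 ∪ (n-2t+1)K_1) is at least √n + 1 - (n-t)/(n-√n). -/

import Mathlib

open SimpleGraph Matrix

/-- `H` is a minor of `G`: branch sets are connected, pairwise disjoint, and
edges of `H` are represented by edges between branch sets. -/
def MinorOf {α : Type*} {β : Type*} (H : SimpleGraph α) (G : SimpleGraph β) : Prop :=
  ∃ f : α → Set β,
    (∀ a, (G.induce (f a)).Connected) ∧
    (Pairwise fun a b => Disjoint (f a) (f b)) ∧
    ∀ a b, H.Adj a b → ∃ u ∈ f a, ∃ v ∈ f b, G.Adj u v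

/-- A graph is outerplanar iff it has no `K₄`-minor and no `K_{2,3}`-minor. -/
def Outerplanar {β : Type*} (G : SimpleGraph β) : Prop :=
  ¬ MinorOf (completeGraph (Fin 4)) G ∧ ¬ MinorOf (completeBipartiteGraph (Fin 2) (Fin 3)) G

/-- The join `G ∨ H` of two graphs. -/
def graphJoin {α β : Type*} (G : SimpleGraph α) (H : SimpleGraph β) : SimpleGraph (α ⊕ β) where
  Adj x y :=
    match x, y with
    | Sum.inl a, Sum.inl b => G.Adj a b
    | Sum.inr a, Sum.inr b => H.Adj a b
    | Sum.inl _, Sum.inr _ => True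
    | Sum.inr _, Sum.inl _ => True
  symm := by constructor; rintro (a|a) (b|b) h <;> first | exact h.symm | trivial
  loopless := by
    constructor; rintro (a|a) h
    · exact G.loopless.irrefl a h
    · exact H.loopless.irrefl a h

open scoped Classical in
/-- The adjacency spectral radius of a finite graph. -/
noncomputable def specRad {V : Type*} [Fintype V] [DecidableEq V]
    (G : SimpleGraph V) : ℝ :=
  sSup (spectrum ℝ (G.adjMatrix ℝ))

/-- The disjoint union of paths with orders given by the list `L`. -/
def pathsUnion (L : List ℕ) : SimpleGraph (Σ i : Fin L.length, Fin (L.get i)) where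
  Adj x y := x.1 = y.1 ∧ (x.2.val + 1 = y.2.val ∨ y.2.val + 1 = x.2.val)
  symm := by constructor; rintro ⟨i, a⟩ ⟨j, b⟩ ⟨h1, h2⟩; exact ⟨h1.symm, h2.symm⟩
  loopless := by constructor; rintro ⟨i, a⟩ ⟨-, h⟩; rcases h with h | h <;> omega

/-- `B_{tl}`: `t` edge-disjoint `l`-cycles sharing exactly one common vertex (`none`). -/
def bouquet (t l : ℕ) : SimpleGraph (Option (Fin t × Fin (l - 1))) where
  Adj x y :=
    match x, y with
    | none, none => False
    | none, some p => p.2.val = 0 ∨ p.2.val = l - 2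
    | some p, none => p.2.val = 0 ∨ p.2.val = l - 2
    | some p, some q => p.1 = q.1 ∧ (p.2.val + 1 = q.2.val ∨ q.2.val + 1 = p.2.val)
  symm := by
    constructor; rintro (_|p) (_|q) h
    · exact h
    · exact h
    · exact h
    · exact ⟨h.1.symm, h.2.symm⟩
  loopless := by
    constructor; rintro (_|p) h
    · exact h
    · rcases h.2 with h' | h' <;> omega

/-- `F` occurs as a subgraph of `G`. -/
def ContainsSubgraph {α β : Type*} (F : SimpleGraph α) (G : SimpleGraph β) : Prop :=
  ∃ f : F →g G, Function.Injective f

/-- `G` has a matching of size `k`. -/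
def HasMatching {V : Type*} (G : SimpleGraph V) (k : ℕ) : Prop :=
  ∃ M : Finset (Sym2 V), M.card = k ∧ ↑M ⊆ G.edgeSet ∧
    (M : Set (Sym2 V)).Pairwise fun e f => ∀ v, v ∈ e → v ∉ f

/-- A linear forest: a disjoint union of (possibly trivial) paths. -/
def IsLinearForest {V : Type*} (H : SimpleGraph V) : Prop :=
  H.IsAcyclic ∧ ∀ v, (H.neighborSet v).ncard ≤ 2

/-- `G` contains a cycle of length `l`. -/
def HasCycleLength {V : Type*} (G : SimpleGraph V) (l : ℕ) : Prop :=
  ∃ (u : V) (w : G.Walk u u), w.IsCycle ∧ w.length = l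
/-- The base graph `(t-1)K₂ ∪ (n-2t+1)K₁` on `m = n-1` vertices: a matching of
`t-1` edges on the first `2(t-1)` vertices, all others isolated. -/
def matchingPlusIsolated (m t : ℕ) : SimpleGraph (Fin m) where
  Adj i j := i ≠ j ∧ i.val < 2 * (t - 1) ∧ j.val < 2 * (t - 1) ∧ i.val / 2 = j.val / 2
  symm := by constructor; rintro i j ⟨h1, h2, h3, h4⟩; exact ⟨h1.symm, h3, h2, h4.symm⟩
  loopless := by constructor; rintro i ⟨h, -⟩; exact h rfl

lemma row_sum (m t : ℕ) (hkm : 2*(t-1) ≤ m) (i : Fin m)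
    [DecidableRel (matchingPlusIsolated m t).Adj] :
    ∑ j : Fin m, (if (matchingPlusIsolated m t).Adj i j then (1:ℝ) else 0)
      = if i.val < 2*(t-1) then 1 else 0 := by
  by_cases hi : i.val < 2*(t-1)
  · rw [if_pos hi]
    obtain ⟨p, hp, hne, hpk, hdiv, huniq⟩ :
        ∃ p, p < m ∧ p ≠ i.val ∧ p < 2*(t-1) ∧ p/2 = i.val/2 ∧
          ∀ q, q ≠ i.val → q < 2*(t-1) → q/2 = i.val/2 → q = p := by
      obtain h2 | h2 := Nat.mod_two_eq_zero_or_one i.val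
      · exact ⟨i.val + 1, by omega, by omega, by omega, by omega, fun q h1 h2' h3 => by omega⟩
      · exact ⟨i.val - 1, by omega, by omega, by omega, by omega, fun q h1 h2' h3 => by omega⟩
    refine Finset.sum_eq_single_of_mem ⟨p, hp⟩ (Finset.mem_univ _) ?_ |>.trans ?_
    · intro j _ hj
      rw [if_neg]
      rintro ⟨h1, h2, h3, h4⟩
      exact hj (Fin.ext (huniq j.val (fun h => h1 (Fin.ext h).symm) h3 h4.symm))
    · rw [if_pos]
      exact ⟨fun h => hne congr(($h).val).symm, hi, hpk, hdiv.symm⟩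
  · rw [if_neg hi]
    refine Finset.sum_eq_zero fun j _ => ?_
    rw [if_neg]
    rintro ⟨-, h2, -⟩
    exact hi h2

lemma count_lt (m k : ℕ) (hkm : k ≤ m) :
    ∑ i : Fin m, (if i.val < k then (1:ℝ) else 0) = k := by
  rw [Fin.sum_univ_eq_sum_range (fun j => if j < k then (1:ℝ) else 0)]
  simp only [← Finset.mem_range]
  rw [Finset.sum_ite_mem, Finset.inter_eq_right.mpr (Finset.range_subset_range.mpr hkm)]
  simp


@[simp] lemma graphJoin_adj_ll {α β : Type*} (G : SimpleGraph α) (H : SimpleGraph β) (a b : α) :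
    (graphJoin G H).Adj (Sum.inl a) (Sum.inl b) ↔ G.Adj a b := Iff.rfl
@[simp] lemma graphJoin_adj_rr {α β : Type*} (G : SimpleGraph α) (H : SimpleGraph β) (a b : β) :
    (graphJoin G H).Adj (Sum.inr a) (Sum.inr b) ↔ H.Adj a b := Iff.rfl
@[simp] lemma graphJoin_adj_lr {α β : Type*} (G : SimpleGraph α) (H : SimpleGraph β) (a : α) (b : β) :
    (graphJoin G H).Adj (Sum.inl a) (Sum.inr b) := trivial
@[simp] lemma graphJoin_adj_rl {α β : Type*} (G : SimpleGraph α) (H : SimpleGraph β) (a : β) (b : α) :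
    (graphJoin G H).Adj (Sum.inr a) (Sum.inl b) := trivial

open scoped Classical in
lemma rayleigh_le_specRad {V : Type*} [Fintype V] [DecidableEq V]
    (G : SimpleGraph V) (v : EuclideanSpace ℝ V) (hv : v ≠ 0) :
    (inner ℝ ((Matrix.toEuclideanLin (G.adjMatrix ℝ)) v) v : ℝ) / ‖v‖ ^ 2 ≤ specRad G := by
  set A := G.adjMatrix ℝ with hAdef
  have hA : A.IsHermitian := by
    ext i j
    simp [Matrix.IsHermitian, Matrix.conjTranspose_apply, A, SimpleGraph.adjMatrix_apply,
      SimpleGraph.adj_comm]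
  set T := Matrix.toEuclideanLin A with hTdef
  have hT : T.IsSymmetric := Matrix.isHermitian_iff_isSymmetric.1 hA
  haveI : Nontrivial (EuclideanSpace ℝ V) := ⟨v, 0, hv⟩
  have h1 := hT.hasEigenvalue_iSup_of_finiteDimensional
  have h2 := h1.mem_spectrum
  rw [Matrix.spectrum_toEuclideanLin] at h2
  have hbdd : BddAbove (Set.range fun x : { x : EuclideanSpace ℝ V // x ≠ 0 } =>
      RCLike.re (inner ℝ (T x) (x : EuclideanSpace ℝ V) : ℝ) / ‖(x : EuclideanSpace ℝ V)‖ ^ 2) := by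
    refine ⟨‖LinearMap.toContinuousLinearMap T‖, ?_⟩
    rintro y ⟨⟨x, hx⟩, rfl⟩
    have hx2 : (0:ℝ) < ‖x‖ ^ 2 := pow_pos (norm_pos_iff.mpr hx) 2
    rw [div_le_iff₀ hx2]
    calc RCLike.re (inner ℝ (T x) x : ℝ) = (inner ℝ (T x) x : ℝ) := rfl
      _ ≤ ‖T x‖ * ‖x‖ := real_inner_le_norm _ _
      _ = ‖LinearMap.toContinuousLinearMap T x‖ * ‖x‖ := by
          rw [LinearMap.coe_toContinuousLinearMap']
      _ ≤ (‖LinearMap.toContinuousLinearMap T‖ * ‖x‖) * ‖x‖ :=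
          mul_le_mul_of_nonneg_right ((LinearMap.toContinuousLinearMap T).le_opNorm x)
            (norm_nonneg _)
      _ = ‖LinearMap.toContinuousLinearMap T‖ * ‖x‖ ^ 2 := by ring
  have h3 := le_ciSup hbdd (⟨v, hv⟩ : { x : EuclideanSpace ℝ V // x ≠ 0 })
  exact le_trans h3 (le_csSup ((G.adjMatrix ℝ).finite_spectrum.bddAbove) h2)


theorem spectral_radius_lower_bound (n t : ℕ) (hn : 4 ≤ n) (ht1 : 1 ≤ t)
    (ht2 : 2 * t ≤ n - 1) :
    Real.sqrt n + 1 - ((n : ℝ) - t) / ((n : ℝ) - Real.sqrt n) ≤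
      specRad (graphJoin (⊥ : SimpleGraph Unit) (matchingPlusIsolated (n - 1) t)) := by
  classical
  set m := n - 1 with hm
  set G := graphJoin (⊥ : SimpleGraph Unit) (matchingPlusIsolated m t) with hG
  set s := Real.sqrt n with hsdef
  have hs2 : 2 ≤ s := by
    rw [hsdef, show (2:ℝ) = Real.sqrt 4 by
      rw [show (4:ℝ) = 2^2 by norm_num, Real.sqrt_sq (by norm_num)]]
    exact Real.sqrt_le_sqrt (by exact_mod_cast hn)
  have hss : s * s = n := Real.mul_self_sqrt (by positivity)
  have hn4 : (4:ℝ) ≤ n := by exact_mod_cast hn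
  have hd : (0:ℝ) < (n:ℝ) - s := by nlinarith
  have hkm : 2*(t-1) ≤ m := by omega
  set f : (Unit ⊕ Fin m) → ℝ := Sum.elim (fun _ => s - 1) (fun _ => 1) with hf
  set v : EuclideanSpace ℝ (Unit ⊕ Fin m) := (WithLp.equiv 2 _).symm f with hvdef
  have hv : v ≠ 0 := by
    intro h
    have := congrFun congr((WithLp.equiv 2 ((Unit ⊕ Fin m) → ℝ)) $h) (Sum.inl ())
    simp [hvdef, hf] at this
    linarith
  have key := rayleigh_le_specRad G v hv
  -- compute mulVec
  have hmul : G.adjMatrix ℝ *ᵥ f = Sum.elim (fun _ => (m:ℝ))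
      (fun i => (s - 1) + (if i.val < 2*(t-1) then (1:ℝ) else 0)) := by
    funext x
    cases x with
    | inl a =>
      simp [Matrix.mulVec, dotProduct, Fintype.sum_sum_type, hG, graphJoin, hf,
        SimpleGraph.adjMatrix_apply]
    | inr i =>
      simp only [Matrix.mulVec, dotProduct, Fintype.sum_sum_type,
        SimpleGraph.adjMatrix_apply, Sum.elim_inr, Sum.elim_inl, hf, hG,
        graphJoin_adj_rl, graphJoin_adj_rr, if_true, mul_one, one_mul, Finset.sum_const,
        Finset.card_univ, Fintype.card_unit, one_smul]
      rw [row_sum m t hkm i]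
  have hcm : ((m:ℕ):ℝ) = (n:ℝ) - 1 := by
    rw [hm]; push_cast [Nat.cast_sub (by omega : 1 ≤ n)]; ring
  have hinner : (inner ℝ ((Matrix.toEuclideanLin (G.adjMatrix ℝ)) v) v : ℝ)
      = 2*((n:ℝ)-1)*(s-1) + 2*((t:ℝ)-1) := by
    rw [hvdef, WithLp.equiv_symm_apply, Matrix.toEuclideanLin_apply_piLp_toLp, hmul]
    simp only [PiLp.inner_apply, PiLp.toLp_apply, RCLike.inner_apply,
      starRingEnd_apply, star_trivial, Fintype.sum_sum_type, Sum.elim_inl, Sum.elim_inr, hf,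
      mul_one, one_mul, Finset.sum_const, Finset.card_univ, Fintype.card_unit, one_smul,
      Fintype.card_fin, nsmul_eq_mul, smul_eq_mul]
    rw [Finset.sum_add_distrib, count_lt m (2*(t-1)) hkm, Finset.sum_const, Finset.card_univ]
    simp only [Fintype.card_fin, nsmul_eq_mul]
    push_cast [Nat.cast_sub (by omega : 1 ≤ n), Nat.cast_sub ht1]
    rw [hcm]; ring
  have hnorm : ‖v‖^2 = 2*((n:ℝ) - s) := by
    rw [← real_inner_self_eq_norm_sq, hvdef, WithLp.equiv_symm_apply]
    simp only [PiLp.inner_apply, PiLp.toLp_apply, RCLike.inner_apply,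
      starRingEnd_apply, star_trivial, Fintype.sum_sum_type, Sum.elim_inl, Sum.elim_inr, hf,
      mul_one, Finset.sum_const, Finset.card_univ, Fintype.card_unit, one_smul,
      Fintype.card_fin, nsmul_eq_mul, smul_eq_mul]
    rw [hcm]
    linear_combination hss
  rw [hinner, hnorm] at key
  refine le_trans (le_of_eq ?_) key
  field_simp
  ring_nf
  linear_combination (-1:ℝ) * hss
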